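/- Let v ≠ w be adjacent vertices of a finite simple graph Γ with st(v) ⊆ st(w), let C be a connected component of the subgraph of Γ induced on V ∖ st(v), and set C′ = C ∖ st(w). Then C′ is a union of connected components of the subgraph of Γ induced on V ∖ st(w), the maps τ_{v,w}, γ_{v,C} and γ_{w,C′} are well-defined automorphisms of A_Γ, and in Aut(A_Γ) one has τ_{v,w} ∘ γ_{v,C} = γ_{v,C} ∘ γ_{w,C′} ∘ τ_{v,w}. -/

import Mathlib

variable {V : Type*}

/-- The star of a vertex: the vertex together with its neighbors. -/
def gstar (Γ : SimpleGraph V) (v : V) : Set V :=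
  insert v (Γ.neighborSet v)

/-- The commutator relations of the right-angled Artin group of `Γ`. -/
def raagRels (Γ : SimpleGraph V) : Set (FreeGroup V) :=
  {r | ∃ u v : V, Γ.Adj u v ∧
    r = FreeGroup.of u * FreeGroup.of v * (FreeGroup.of u)⁻¹ * (FreeGroup.of v)⁻¹}

/-- The right-angled Artin group `A_Γ`, presented with generating set `V` and
one commuting relation for each edge of `Γ`. -/
abbrev RAAG (Γ : SimpleGraph V) := PresentedGroup (raagRels Γ)

/-- The generator of `A_Γ` corresponding to the vertex `v`. -/
def raagGen (Γ : SimpleGraph V) (v : V) : RAAG Γ := PresentedGroup.of v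

/-- `φ` is the elementary automorphism of `A_Γ` sending the generator `a` to
`a·b` and fixing every other generator.  (This is the elementary twist
`τ_{a,b}` when `a ≠ b` are adjacent and `st(a) ⊆ st(b)`, and the elementary
fold `ρ_{a,b}` when `lk(a) ⊆ lk(b)`.) -/
def IsElemAut (Γ : SimpleGraph V) (a c : V) (φ : MulAut (RAAG Γ)) : Prop :=
  φ (raagGen Γ a) = raagGen Γ a * raagGen Γ c ∧
    ∀ u : V, u ≠ a → φ (raagGen Γ u) = raagGen Γ u

/-- `γ` is the partial conjugation `γ_{u,C}`: the automorphism of `A_Γ` sending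
each generator `x ∈ C` to `u·x·u⁻¹` and fixing every other generator. -/
def IsPartialConj (Γ : SimpleGraph V) (u : V) (C : Set V)
    (γ : MulAut (RAAG Γ)) : Prop :=
  (∀ x ∈ C, γ (raagGen Γ x) = raagGen Γ u * raagGen Γ x * (raagGen Γ u)⁻¹) ∧
    ∀ x ∉ C, γ (raagGen Γ x) = raagGen Γ x

/-- `C` is a connected component of the subgraph of `Γ` induced on
`V ∖ st(u)`. -/
def IsComponent (Γ : SimpleGraph V) (u : V) (C : Set V) : Prop :=
  C ⊆ {x : V | x ∉ gstar Γ u} ∧ C.Nonempty ∧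
    ∀ a b : ({x : V | x ∉ gstar Γ u} : Set V), (a : V) ∈ C →
      ((Γ.induce {x : V | x ∉ gstar Γ u}).Reachable a b ↔ (b : V) ∈ C)

/-- `C` is a union of connected components of the subgraph of `Γ` induced on
`V ∖ st(u)`. -/
def IsUnionOfComponents (Γ : SimpleGraph V) (u : V) (C : Set V) : Prop :=
  C ⊆ {x : V | x ∉ gstar Γ u} ∧
    ∀ a b : ({x : V | x ∉ gstar Γ u} : Set V),
      (Γ.induce {x : V | x ∉ gstar Γ u}).Reachable a b →
        ((a : V) ∈ C ↔ (b : V) ∈ C)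

section Aux

open Classical

variable (Γ : SimpleGraph V)

lemma raag_commute {a b : V} (h : Γ.Adj a b) :
    Commute (raagGen Γ a) (raagGen Γ b) := by
  have h1 : PresentedGroup.mk (raagRels Γ)
      (FreeGroup.of a * FreeGroup.of b * (FreeGroup.of a)⁻¹ * (FreeGroup.of b)⁻¹) = 1 := by
    apply (QuotientGroup.eq_one_iff _).2
    exact Subgroup.subset_normalClosure ⟨a, b, h, rfl⟩
  have h2 : raagGen Γ a * raagGen Γ b * (raagGen Γ a)⁻¹ * (raagGen Γ b)⁻¹ = 1 := by
    simpa [raagGen, PresentedGroup.of] using h1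
  have h3 : raagGen Γ a * raagGen Γ b = raagGen Γ b * raagGen Γ a := by
    have h4 := mul_eq_one_iff_eq_inv.1 h2
    rw [inv_inv] at h4
    conv_rhs => rw [← h4]
    group
  exact h3

lemma commute_conj {G : Type*} [Group G] {x y : G} (z : G) (h : Commute x y) :
    Commute (z * x * z⁻¹) (z * y * z⁻¹) := by
  show (z*x*z⁻¹)*(z*y*z⁻¹) = (z*y*z⁻¹)*(z*x*z⁻¹)
  calc (z*x*z⁻¹)*(z*y*z⁻¹) = z*(x*y)*z⁻¹ := by group
    _ = z*(y*x)*z⁻¹ := by rw [h.eq]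
    _ = (z*y*z⁻¹)*(z*x*z⁻¹) := by group

lemma rels_check (f : V → RAAG Γ)
    (hf : ∀ a b : V, Γ.Adj a b → Commute (f a) (f b)) :
    ∀ r ∈ raagRels Γ, FreeGroup.lift f r = 1 := by
  rintro r ⟨a, b, hab, rfl⟩
  have : FreeGroup.lift f
      (FreeGroup.of a * FreeGroup.of b * (FreeGroup.of a)⁻¹ * (FreeGroup.of b)⁻¹)
      = f a * f b * (f a)⁻¹ * (f b)⁻¹ := by
    simp
  rw [this, (hf a b hab).eq]
  group

/-- Build an automorphism of the RAAG from generator maps in both directions. -/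
def mkAut (f f' : V → RAAG Γ)
    (hf : ∀ r ∈ raagRels Γ, FreeGroup.lift f r = 1)
    (hf' : ∀ r ∈ raagRels Γ, FreeGroup.lift f' r = 1)
    (h1 : ∀ x, PresentedGroup.toGroup hf' (f x) = raagGen Γ x)
    (h2 : ∀ x, PresentedGroup.toGroup hf (f' x) = raagGen Γ x) : MulAut (RAAG Γ) :=
  { toFun := PresentedGroup.toGroup hf
    invFun := PresentedGroup.toGroup hf'
    left_inv := fun x => by
      have h : (PresentedGroup.toGroup hf').comp (PresentedGroup.toGroup hf)
          = MonoidHom.id (RAAG Γ) := by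
        ext t
        simp [PresentedGroup.toGroup.of, h1 t, raagGen]
      simpa using DFunLike.congr_fun h x
    right_inv := fun x => by
      have h : (PresentedGroup.toGroup hf).comp (PresentedGroup.toGroup hf')
          = MonoidHom.id (RAAG Γ) := by
        ext t
        simp [PresentedGroup.toGroup.of, h2 t, raagGen]
      simpa using DFunLike.congr_fun h x
    map_mul' := map_mul _ }

lemma mkAut_gen (f f' : V → RAAG Γ) (hf) (hf') (h1) (h2) (x : V) :
    mkAut Γ f f' hf hf' h1 h2 (raagGen Γ x) = f x :=
  PresentedGroup.toGroup.of hf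

lemma raag_autext {φ ψ : MulAut (RAAG Γ)}
    (h : ∀ x, φ (raagGen Γ x) = ψ (raagGen Γ x)) : φ = ψ := by
  have : (φ : RAAG Γ →* RAAG Γ) = (ψ : RAAG Γ →* RAAG Γ) :=
    PresentedGroup.ext fun x => h x
  exact MulEquiv.toMonoidHom_injective this

lemma toGroup_gen {Γ : SimpleGraph V} {f : V → RAAG Γ}
    (hf : ∀ r ∈ raagRels Γ, FreeGroup.lift f r = 1) (x : V) :
    PresentedGroup.toGroup hf (raagGen Γ x) = f x :=
  PresentedGroup.toGroup.of hf

lemma mem_gstar_self (Γ : SimpleGraph V) (a : V) : a ∈ gstar Γ a :=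
  Set.mem_insert _ _

lemma mem_gstar_of_adj (Γ : SimpleGraph V) {a b : V} (h : Γ.Adj a b) :
    b ∈ gstar Γ a :=
  Set.mem_insert_iff.2 (Or.inr h)

lemma exists_twist (Γ : SimpleGraph V) (v w : V) (hvw : v ≠ w) (hadj : Γ.Adj v w)
    (hst : gstar Γ v ⊆ gstar Γ w) :
    ∃ τ : MulAut (RAAG Γ), IsElemAut Γ v w τ := by
  classical
  have hwv : w ≠ v := hvw.symm
  have hcomm : ∀ b : V, Γ.Adj v b → Commute (raagGen Γ w) (raagGen Γ b) := by
    intro b hb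
    have hbw : b ∈ gstar Γ w := hst (mem_gstar_of_adj Γ hb)
    rcases Set.mem_insert_iff.1 hbw with h | h
    · exact h ▸ Commute.refl _
    · exact raag_commute Γ h
  set f : V → RAAG Γ :=
    fun u => if u = v then raagGen Γ v * raagGen Γ w else raagGen Γ u with hf_def
  set f' : V → RAAG Γ :=
    fun u => if u = v then raagGen Γ v * (raagGen Γ w)⁻¹ else raagGen Γ u with hf'_def
  have hcf : ∀ a b : V, Γ.Adj a b → Commute (f a) (f b) := by
    intro a b hab
    by_cases ha : a = v <;> by_cases hb : b = v
    · subst ha; subst hb; exact absurd hab (Γ.loopless.irrefl _)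
    · subst ha
      simp only [hf_def, if_pos rfl, if_neg hb]
      exact (raag_commute Γ hab).mul_left (hcomm b hab)
    · subst hb
      simp only [hf_def, if_pos rfl, if_neg ha]
      exact ((raag_commute Γ hab.symm).mul_left (hcomm a hab.symm)).symm
    · simp only [hf_def, if_neg ha, if_neg hb]
      exact raag_commute Γ hab
  have hcf' : ∀ a b : V, Γ.Adj a b → Commute (f' a) (f' b) := by
    intro a b hab
    by_cases ha : a = v <;> by_cases hb : b = v
    · subst ha; subst hb; exact absurd hab (Γ.loopless.irrefl _)
    · subst ha
      simp only [hf'_def, if_pos rfl, if_neg hb]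
      exact (raag_commute Γ hab).mul_left (hcomm b hab).inv_left
    · subst hb
      simp only [hf'_def, if_pos rfl, if_neg ha]
      exact ((raag_commute Γ hab.symm).mul_left (hcomm a hab.symm).inv_left).symm
    · simp only [hf'_def, if_neg ha, if_neg hb]
      exact raag_commute Γ hab
  have hr := rels_check Γ f hcf
  have hr' := rels_check Γ f' hcf'
  have h1 : ∀ x, PresentedGroup.toGroup hr' (f x) = raagGen Γ x := by
    intro x
    by_cases hx : x = v
    · subst hx
      simp only [hf_def, if_pos rfl, map_mul, toGroup_gen, hf'_def, if_neg hwv, if_pos rfl, if_true]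
      group
    · simp only [hf_def, if_neg hx, toGroup_gen, hf'_def, if_neg hx]
  have h2 : ∀ x, PresentedGroup.toGroup hr (f' x) = raagGen Γ x := by
    intro x
    by_cases hx : x = v
    · subst hx
      simp only [hf'_def, if_pos rfl, map_mul, map_inv, toGroup_gen, hf_def, if_neg hwv,
        if_pos rfl, if_true]
      group
    · simp only [hf'_def, if_neg hx, toGroup_gen, hf_def, if_neg hx]
  refine ⟨mkAut Γ f f' hr hr' h1 h2, ?_, ?_⟩
  · rw [mkAut_gen]; simp [hf_def]
  · intro u hu; rw [mkAut_gen]; simp [hf_def, hu]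

lemma exists_pconj (Γ : SimpleGraph V) (u : V) (C : Set V)
    (hsub : ∀ x ∈ C, x ∉ gstar Γ u)
    (hkey : ∀ a b : V, a ∈ C → b ∉ C → Γ.Adj a b → Γ.Adj u b) :
    ∃ γ : MulAut (RAAG Γ), IsPartialConj Γ u C γ := by
  classical
  have hu_not : u ∉ C := fun h => hsub u h (mem_gstar_self Γ u)
  set f : V → RAAG Γ :=
    fun x => if x ∈ C then raagGen Γ u * raagGen Γ x * (raagGen Γ u)⁻¹
      else raagGen Γ x with hf_def
  set f' : V → RAAG Γ :=
    fun x => if x ∈ C then (raagGen Γ u)⁻¹ * raagGen Γ x * raagGen Γ u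
      else raagGen Γ x with hf'_def
  have hcf : ∀ a b : V, Γ.Adj a b → Commute (f a) (f b) := by
    intro a b hab
    by_cases ha : a ∈ C <;> by_cases hb : b ∈ C
    · simp only [hf_def, if_pos ha, if_pos hb]
      exact commute_conj _ (raag_commute Γ hab)
    · simp only [hf_def, if_pos ha, if_neg hb]
      have hub := raag_commute Γ (hkey a b ha hb hab)
      exact (hub.mul_left (raag_commute Γ hab)).mul_left hub.inv_left
    · simp only [hf_def, if_neg ha, if_pos hb]
      have hub := raag_commute Γ (hkey b a hb ha hab.symm)
      exact ((hub.mul_left (raag_commute Γ hab.symm)).mul_left hub.inv_left).symm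
    · simp only [hf_def, if_neg ha, if_neg hb]
      exact raag_commute Γ hab
  have hcf' : ∀ a b : V, Γ.Adj a b → Commute (f' a) (f' b) := by
    intro a b hab
    by_cases ha : a ∈ C <;> by_cases hb : b ∈ C
    · simp only [hf'_def, if_pos ha, if_pos hb]
      simpa using commute_conj (raagGen Γ u)⁻¹ (raag_commute Γ hab)
    · simp only [hf'_def, if_pos ha, if_neg hb]
      have hub := raag_commute Γ (hkey a b ha hb hab)
      exact (hub.inv_left.mul_left (raag_commute Γ hab)).mul_left hub
    · simp only [hf'_def, if_neg ha, if_pos hb]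
      have hub := raag_commute Γ (hkey b a hb ha hab.symm)
      exact ((hub.inv_left.mul_left (raag_commute Γ hab.symm)).mul_left hub).symm
    · simp only [hf'_def, if_neg ha, if_neg hb]
      exact raag_commute Γ hab
  have hr := rels_check Γ f hcf
  have hr' := rels_check Γ f' hcf'
  have h1 : ∀ x, PresentedGroup.toGroup hr' (f x) = raagGen Γ x := by
    intro x
    by_cases hx : x ∈ C
    · simp only [hf_def, if_pos hx, map_mul, map_inv, toGroup_gen, hf'_def, if_pos hx,
        if_neg hu_not]
      group
    · simp only [hf_def, if_neg hx, toGroup_gen, hf'_def, if_neg hx]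
  have h2 : ∀ x, PresentedGroup.toGroup hr (f' x) = raagGen Γ x := by
    intro x
    by_cases hx : x ∈ C
    · simp only [hf'_def, if_pos hx, map_mul, map_inv, toGroup_gen, hf_def, if_pos hx,
        if_neg hu_not]
      group
    · simp only [hf'_def, if_neg hx, toGroup_gen, hf_def, if_neg hx]
  refine ⟨mkAut Γ f f' hr hr' h1 h2, ?_, ?_⟩
  · intro x hx; rw [mkAut_gen]; simp [hf_def, hx]
  · intro x hx; rw [mkAut_gen]; simp [hf_def, hx]

lemma comp_key (Γ : SimpleGraph V) (v : V) (C : Set V) (hC : IsComponent Γ v C)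
    {a b : V} (ha : a ∈ C) (hb : b ∉ gstar Γ v) (hab : Γ.Adj a b) : b ∈ C := by
  have ha' : a ∈ {x : V | x ∉ gstar Γ v} := hC.1 ha
  have hadj' : (Γ.induce {x : V | x ∉ gstar Γ v}).Adj ⟨a, ha'⟩ ⟨b, hb⟩ := by
    simpa using hab
  exact (hC.2.2 ⟨a, ha'⟩ ⟨b, hb⟩ ha).1 hadj'.reachable

lemma comp_hkey (Γ : SimpleGraph V) (v : V) (C : Set V) (hC : IsComponent Γ v C) :
    ∀ a b : V, a ∈ C → b ∉ C → Γ.Adj a b → Γ.Adj v b := by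
  intro a b ha hb hab
  by_cases hbs : b ∈ gstar Γ v
  · rcases Set.mem_insert_iff.1 hbs with h | h
    · subst h
      exact absurd (mem_gstar_of_adj Γ hab.symm) (hC.1 ha)
    · exact h
  · exact absurd (comp_key Γ v C hC ha hbs hab) hb

lemma uoc_key (Γ : SimpleGraph V) (w : V) (C' : Set V)
    (hU : IsUnionOfComponents Γ w C') {a b : V} (ha : a ∈ C')
    (hb : b ∉ gstar Γ w) (hab : Γ.Adj a b) : b ∈ C' := by
  have ha' : a ∈ {x : V | x ∉ gstar Γ w} := hU.1 ha
  have hadj' : (Γ.induce {x : V | x ∉ gstar Γ w}).Adj ⟨a, ha'⟩ ⟨b, hb⟩ := by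
    simpa using hab
  exact (hU.2 ⟨a, ha'⟩ ⟨b, hb⟩ hadj'.reachable).1 ha

lemma uoc_hkey (Γ : SimpleGraph V) (w : V) (C' : Set V)
    (hU : IsUnionOfComponents Γ w C') :
    ∀ a b : V, a ∈ C' → b ∉ C' → Γ.Adj a b → Γ.Adj w b := by
  intro a b ha hb hab
  by_cases hbs : b ∈ gstar Γ w
  · rcases Set.mem_insert_iff.1 hbs with h | h
    · subst h
      exact absurd (mem_gstar_of_adj Γ hab.symm) (hU.1 ha)
    · exact h
  · exact absurd (uoc_key Γ w C' hU ha hbs hab) hb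

end Aux

/-- Let `v ≠ w` be adjacent with `st(v) ⊆ st(w)`, and let `C` be a connected
component of the subgraph induced on `V ∖ st(v)`.  Then `C' = C ∖ st(w)` is a
union of connected components of the subgraph induced on `V ∖ st(w)`, the maps
`τ_{v,w}`, `γ_{v,C}` and `γ_{w,C'}` are well-defined automorphisms of `A_Γ`,
and `τ_{v,w} ∘ γ_{v,C} = γ_{v,C} ∘ γ_{w,C'} ∘ τ_{v,w}` in `Aut(A_Γ)`. -/
theorem stmt_14 [Fintype V] (Γ : SimpleGraph V) (v w : V) (hvw : v ≠ w)
    (hadj : Γ.Adj v w) (hst : gstar Γ v ⊆ gstar Γ w)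
    (C : Set V) (hC : IsComponent Γ v C) :
    IsUnionOfComponents Γ w (C \ gstar Γ w) ∧
    (∃ τ : MulAut (RAAG Γ), IsElemAut Γ v w τ) ∧
    (∃ γ : MulAut (RAAG Γ), IsPartialConj Γ v C γ) ∧
    (∃ γ' : MulAut (RAAG Γ), IsPartialConj Γ w (C \ gstar Γ w) γ') ∧
    (∀ τ γ γ' : MulAut (RAAG Γ), IsElemAut Γ v w τ → IsPartialConj Γ v C γ →
      IsPartialConj Γ w (C \ gstar Γ w) γ' → τ * γ = γ * γ' * τ) := by
  classical
  have part1 : IsUnionOfComponents Γ w (C \ gstar Γ w) := by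
    constructor
    · exact fun x hx => hx.2
    · rintro a b ⟨p⟩
      induction p with
      | nil => exact Iff.rfl
      | @cons x y z hxy p ih =>
        refine Iff.trans ?_ ih
        have hab : Γ.Adj (x : V) (y : V) := hxy
        have hax : (x : V) ∉ gstar Γ v := fun h => x.2 (hst h)
        have hay : (y : V) ∉ gstar Γ v := fun h => y.2 (hst h)
        constructor
        · rintro ⟨hxC, -⟩
          exact ⟨comp_key Γ v C hC hxC hay hab, y.2⟩
        · rintro ⟨hyC, -⟩
          exact ⟨comp_key Γ v C hC hyC hax hab.symm, x.2⟩
  have hγex := exists_pconj Γ v C (fun x hx => hC.1 hx) (comp_hkey Γ v C hC)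
  have hγ'ex := exists_pconj Γ w (C \ gstar Γ w) (fun x hx => hx.2)
    (uoc_hkey Γ w _ part1)
  refine ⟨part1, exists_twist Γ v w hvw hadj hst, hγex, hγ'ex, ?_⟩
  intro τ γ γ' ht hg hg'
  have hvC : v ∉ C := fun h => hC.1 h (mem_gstar_self Γ v)
  have hwC : w ∉ C := fun h => hC.1 h (mem_gstar_of_adj Γ hadj)
  have hvC' : v ∉ C \ gstar Γ w := fun h => h.2 (hst (mem_gstar_self Γ v))
  have hwC' : w ∉ C \ gstar Γ w := fun h => h.2 (mem_gstar_self Γ w)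
  apply raag_autext
  intro x
  simp only [MulAut.mul_apply]
  by_cases hx : x ∈ C
  · have hxv : x ≠ v := fun e => hvC (e ▸ hx)
    have hxw : x ≠ w := fun e => hwC (e ▸ hx)
    rw [hg.1 x hx, map_mul, map_mul, map_inv, ht.1, ht.2 x hxv]
    by_cases hxsw : x ∈ gstar Γ w
    · have hxC' : x ∉ C \ gstar Γ w := fun h => h.2 hxsw
      rw [hg'.2 x hxC', hg.1 x hx]
      have hcwx : Commute (raagGen Γ w) (raagGen Γ x) := by
        rcases Set.mem_insert_iff.1 hxsw with h | h
        · exact absurd h hxw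
        · exact raag_commute Γ h
      have hc : raagGen Γ w * raagGen Γ x = raagGen Γ x * raagGen Γ w := hcwx.eq
      calc raagGen Γ v * raagGen Γ w * raagGen Γ x * (raagGen Γ v * raagGen Γ w)⁻¹
          = raagGen Γ v * (raagGen Γ w * raagGen Γ x * (raagGen Γ w)⁻¹) *
            (raagGen Γ v)⁻¹ := by group
        _ = raagGen Γ v * (raagGen Γ x * raagGen Γ w * (raagGen Γ w)⁻¹) *
            (raagGen Γ v)⁻¹ := by rw [hc]
        _ = raagGen Γ v * raagGen Γ x * (raagGen Γ v)⁻¹ := by group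
    · have hxC' : x ∈ C \ gstar Γ w := ⟨hx, hxsw⟩
      rw [hg'.1 x hxC', map_mul, map_mul, map_inv, hg.2 w hwC, hg.1 x hx]
      have hc : raagGen Γ v * raagGen Γ w = raagGen Γ w * raagGen Γ v :=
        (raag_commute Γ hadj).eq
      calc raagGen Γ v * raagGen Γ w * raagGen Γ x * (raagGen Γ v * raagGen Γ w)⁻¹
          = raagGen Γ w * raagGen Γ v * raagGen Γ x * (raagGen Γ w * raagGen Γ v)⁻¹ := by
            rw [hc]
        _ = raagGen Γ w * (raagGen Γ v * raagGen Γ x * (raagGen Γ v)⁻¹) *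
            (raagGen Γ w)⁻¹ := by group
  · by_cases hxv : x = v
    · subst hxv
      rw [hg.2 x hx, ht.1, map_mul, hg'.2 x hvC', hg'.2 w hwC', map_mul,
        hg.2 x hx, hg.2 w hwC]
    · have hxC' : x ∉ C \ gstar Γ w := fun h => hx h.1
      rw [hg.2 x hx, ht.2 x hxv, hg'.2 x hxC', hg.2 x hx]
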